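/- Let γ > 0 and n_x ≥ 1. The sets G⁺ = {Z ∈ G_γ : det Π > 0} and G⁻ = {Z ∈ G_γ : det Π < 0} are disjoint and satisfy G_γ = G⁺ ∪ G⁻; moreover, if F_γ is nonempty then G⁺ and G⁻ are each nonempty and path-connected, so G_γ has exactly two path-connected components. -/

import Mathlib

open Matrix

noncomputable section

/-- Operator norm (largest singular value) of a complex matrix. -/
def matOpNorm {m n : ℕ} (M : Matrix (Fin m) (Fin n) ℂ) : ℝ :=
  ‖(Matrix.toEuclideanLin M).toContinuousLinearMap‖

/-- A real square matrix is Hurwitz if all its eigenvalues (over ℂ) have negative real part. -/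
def IsHurwitz {n : Type*} [Fintype n] [DecidableEq n] (M : Matrix n n ℝ) : Prop :=
  ∀ μ ∈ spectrum ℂ (M.map (Complex.ofReal ·)), μ.re < 0

/-- The plant data. -/
structure Plant (nx nu ny nw nz : ℕ) where
  A : Matrix (Fin nx) (Fin nx) ℝ
  B1 : Matrix (Fin nx) (Fin nw) ℝ
  B2 : Matrix (Fin nx) (Fin nu) ℝ
  C1 : Matrix (Fin nz) (Fin nx) ℝ
  C2 : Matrix (Fin ny) (Fin nx) ℝ
  D11 : Matrix (Fin nz) (Fin nw) ℝ
  D12 : Matrix (Fin nz) (Fin nu) ℝ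
  D21 : Matrix (Fin ny) (Fin nw) ℝ

namespace Plant

variable {nx nu ny nw nz : ℕ} (P : Plant nx nu ny nw nz)

/-- Closed-loop `A` matrix. -/
def Acl (K : Matrix (Fin nu ⊕ Fin nx) (Fin ny ⊕ Fin nx) ℝ) :
    Matrix (Fin nx ⊕ Fin nx) (Fin nx ⊕ Fin nx) ℝ :=
  fromBlocks (P.A + P.B2 * K.toBlocks₁₁ * P.C2) (P.B2 * K.toBlocks₁₂)
    (K.toBlocks₂₁ * P.C2) K.toBlocks₂₂

/-- Closed-loop `B` matrix. -/
def Bcl (K : Matrix (Fin nu ⊕ Fin nx) (Fin ny ⊕ Fin nx) ℝ) :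
    Matrix (Fin nx ⊕ Fin nx) (Fin nw) ℝ :=
  fromRows (P.B1 + P.B2 * K.toBlocks₁₁ * P.D21) (K.toBlocks₂₁ * P.D21)

/-- Closed-loop `C` matrix. -/
def Ccl (K : Matrix (Fin nu ⊕ Fin nx) (Fin ny ⊕ Fin nx) ℝ) :
    Matrix (Fin nz) (Fin nx ⊕ Fin nx) ℝ :=
  fromCols (P.C1 + P.D12 * K.toBlocks₁₁ * P.C2) (P.D12 * K.toBlocks₁₂)

/-- Closed-loop `D` matrix. -/
def Dcl (K : Matrix (Fin nu ⊕ Fin nx) (Fin ny ⊕ Fin nx) ℝ) :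
    Matrix (Fin nz) (Fin nw) ℝ :=
  P.D11 + P.D12 * K.toBlocks₁₁ * P.D21

/-- The set of stabilizing full-order dynamic output feedback controllers. -/
def Cstab : Set (Matrix (Fin nu ⊕ Fin nx) (Fin ny ⊕ Fin nx) ℝ) :=
  {K | IsHurwitz (P.Acl K)}

/-- Closed-loop transfer matrix at frequency `s = iω`. -/
def transferAt (K : Matrix (Fin nu ⊕ Fin nx) (Fin ny ⊕ Fin nx) ℝ) (ω : ℝ) :
    Matrix (Fin nz) (Fin nw) ℂ :=
  (P.Ccl K).map (Complex.ofReal ·) *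
    (((Complex.I * (ω : ℂ)) • (1 : Matrix (Fin nx ⊕ Fin nx) (Fin nx ⊕ Fin nx) ℂ)
        - (P.Acl K).map (Complex.ofReal ·))⁻¹) *
    (P.Bcl K).map (Complex.ofReal ·) + (P.Dcl K).map (Complex.ofReal ·)

/-- Closed-loop H∞ norm. -/
def hinfNorm (K : Matrix (Fin nu ⊕ Fin nx) (Fin ny ⊕ Fin nx) ℝ) : ℝ :=
  ⨆ ω : ℝ, matOpNorm (P.transferAt K ω)

/-- The feasible set `K_γ`. -/
def Kset (γ : ℝ) : Set (Matrix (Fin nu ⊕ Fin nx) (Fin ny ⊕ Fin nx) ℝ) :=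
  {K | K ∈ P.Cstab ∧ P.hinfNorm K < γ}

end Plant

/-- The similarity transformation `𝒯_T` on full-order controllers. -/
def simT {nx nu ny : ℕ} (T : Matrix (Fin nx) (Fin nx) ℝ)
    (K : Matrix (Fin nu ⊕ Fin nx) (Fin ny ⊕ Fin nx) ℝ) :
    Matrix (Fin nu ⊕ Fin nx) (Fin ny ⊕ Fin nx) ℝ :=
  fromBlocks K.toBlocks₁₁ (K.toBlocks₁₂ * T⁻¹) (T * K.toBlocks₂₁) (T * K.toBlocks₂₂ * T⁻¹)

/-- The symmetric block matrix `M_γ(X, Y, Â, B̂, Ĉ, D̂)` from the change of variables in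
`H∞` synthesis. -/
def Mγmat {nx nu ny nw nz : ℕ} (P : Plant nx nu ny nw nz) (γ : ℝ)
    (X Y Ah : Matrix (Fin nx) (Fin nx) ℝ) (Bh : Matrix (Fin nx) (Fin ny) ℝ)
    (Ch : Matrix (Fin nu) (Fin nx) ℝ) (Dh : Matrix (Fin nu) (Fin ny) ℝ) :
    Matrix ((Fin nx ⊕ Fin nx) ⊕ (Fin nw ⊕ Fin nz)) ((Fin nx ⊕ Fin nx) ⊕ (Fin nw ⊕ Fin nz)) ℝ :=
  let M11 := P.A * X + X * P.Aᵀ + P.B2 * Ch + (P.B2 * Ch)ᵀ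
  let M12 := Ahᵀ + (P.A + P.B2 * Dh * P.C2)
  let M13 := P.B1 + P.B2 * Dh * P.D21
  let M14 := (P.C1 * X + P.D12 * Ch)ᵀ
  let M22 := P.Aᵀ * Y + Y * P.A + Bh * P.C2 + (Bh * P.C2)ᵀ
  let M23 := Y * P.B1 + Bh * P.D21
  let M24 := (P.C1 + P.D12 * Dh * P.C2)ᵀ
  let M34 := (P.D11 + P.D12 * Dh * P.D21)ᵀ
  fromBlocks (fromBlocks M11 M12 M12ᵀ M22) (fromBlocks M13 M14 M23 M24)
    (fromBlocks M13ᵀ M23ᵀ M14ᵀ M24ᵀ)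
    (fromBlocks ((-γ) • (1 : Matrix (Fin nw) (Fin nw) ℝ)) M34 M34ᵀ
      ((-γ) • (1 : Matrix (Fin nz) (Fin nz) ℝ)))

/-- The tuple `(X, Y, Â, B̂, Ĉ, D̂)` of decision variables of the LMI. -/
abbrev FTuple (nx nu ny : ℕ) : Type :=
  Matrix (Fin nx) (Fin nx) ℝ × Matrix (Fin nx) (Fin nx) ℝ × Matrix (Fin nx) (Fin nx) ℝ ×
    Matrix (Fin nx) (Fin ny) ℝ × Matrix (Fin nu) (Fin nx) ℝ × Matrix (Fin nu) (Fin ny) ℝ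

/-- The tuple `(X, Y, Â, B̂, Ĉ, D̂, Π, Ξ)`. -/
abbrev GTuple (nx nu ny : ℕ) : Type :=
  FTuple nx nu ny × Matrix (Fin nx) (Fin nx) ℝ × Matrix (Fin nx) (Fin nx) ℝ

/-- The convex set `F_γ`: tuples `(X, Y, Â, B̂, Ĉ, D̂)` with `X, Y` symmetric,
`[[X, I],[I, Y]] ≻ 0` and `M_γ(X,Y,Â,B̂,Ĉ,D̂) ≺ 0`. -/
def Fset {nx nu ny nw nz : ℕ} (P : Plant nx nu ny nw nz) (γ : ℝ) : Set (FTuple nx nu ny) :=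
  {W | W.1.IsSymm ∧ W.2.1.IsSymm ∧
    (fromBlocks W.1 (1 : Matrix (Fin nx) (Fin nx) ℝ) 1 W.2.1).PosDef ∧
    (-(Mγmat P γ W.1 W.2.1 W.2.2.1 W.2.2.2.1 W.2.2.2.2.1 W.2.2.2.2.2)).PosDef}

/-- The set `G_γ`: tuples `(X, Y, Â, B̂, Ĉ, D̂, Π, Ξ)` with `(X,…,D̂) ∈ F_γ` and
`Ξ·Π = I − YX`. -/
def Gset {nx nu ny nw nz : ℕ} (P : Plant nx nu ny nw nz) (γ : ℝ) : Set (GTuple nx nu ny) :=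
  {Z | Z.1 ∈ Fset P γ ∧ Z.2.2 * Z.2.1 = 1 - Z.1.2.1 * Z.1.1}

/-- The controller-reconstruction map `Φ`. -/
def Phi {nx nu ny nw nz : ℕ} (P : Plant nx nu ny nw nz) (Z : GTuple nx nu ny) :
    Matrix (Fin nu ⊕ Fin nx) (Fin ny ⊕ Fin nx) ℝ :=
  match Z with
  | ((X, Y, Ah, Bh, Ch, Dh), Pm, Ξ) =>
    (fromBlocks (1 : Matrix (Fin nu) (Fin nu) ℝ) 0 (Y * P.B2) Ξ)⁻¹ *
      fromBlocks Dh Ch Bh (Ah - Y * P.A * X) *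
      (fromBlocks (1 : Matrix (Fin ny) (Fin ny) ℝ) (P.C2 * X) 0 Pm)⁻¹

namespace GTC


lemma joinedIn_of_mem {X : Type*} [TopologicalSpace X] (S : Set X) {f : unitInterval → X}
    (hf : Continuous f) (h : ∀ t, f t ∈ S) :
    JoinedIn S (f 0) (f 1) :=
  ⟨⟨⟨f, hf⟩, rfl, rfl⟩, h⟩

variable {n : ℕ}

def U (n : ℕ) : Set (Matrix (Fin n) (Fin n) ℝ) := {M | M.det ≠ 0}

lemma joinedIn_mul {A B C D : Matrix (Fin n) (Fin n) ℝ}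
    (h1 : JoinedIn (U n) A B) (h2 : JoinedIn (U n) C D) :
    JoinedIn (U n) (A * C) (B * D) := by
  obtain ⟨γ₁, hγ₁⟩ := h1
  obtain ⟨γ₂, hγ₂⟩ := h2
  have := joinedIn_of_mem (U n) (f := fun t => γ₁ t * γ₂ t)
    (γ₁.continuous.matrix_mul γ₂.continuous)
    (fun t => by
      simp only [U, Set.mem_setOf_eq, det_mul]
      exact mul_ne_zero (hγ₁ t) (hγ₂ t))
  simpa using this

lemma joinedIn_transvection (i j : Fin n) (hij : i ≠ j) (c : ℝ) :
    JoinedIn (U n) (Matrix.transvection i j c) 1 := by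
  have := joinedIn_of_mem (U n)
    (f := fun t : unitInterval => Matrix.transvection i j ((1 - (t:ℝ)) * c)) ?_ ?_
  · simpa using this
  · apply continuous_matrix
    intro k l
    simp only [Matrix.transvection, Matrix.add_apply, Matrix.single, of_apply]
    by_cases h : i = k ∧ j = l
    · simp only [h, and_self, if_true]
      exact continuous_const.add (((continuous_const.sub continuous_subtype_val).mul
        continuous_const))
    · simp only [if_neg h]
      exact continuous_const
  · intro t
    simp only [U, Set.mem_setOf_eq, Matrix.det_transvection_of_ne i j hij]
    exact one_ne_zero


def Dmat (i j : Fin n) : Matrix (Fin n) (Fin n) ℝ :=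
  Matrix.diagonal (fun k => if k = i ∨ k = j then -1 else 1)

lemma stdBasis_neg_one (a b : Fin n) :
    single a b (-1:ℝ) = -single a b 1 := by
  rw [← neg_one_smul ℝ (single a b (1:ℝ)), Matrix.smul_single]
  norm_num

lemma w_eq (i j : Fin n) (hij : i ≠ j) :
    Matrix.transvection i j 1 * Matrix.transvection j i (-1) * Matrix.transvection i j 1 =
      1 + single i j (1:ℝ) - single j i 1 - single i i 1
        - single j j 1 := by
  simp only [Matrix.transvection, Matrix.add_mul, Matrix.mul_add, Matrix.one_mul, Matrix.mul_one,
    Matrix.single_mul_single_same, Matrix.single_mul_single_of_ne, hij, hij.symm,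
    ne_eq, not_false_iff, one_mul, mul_one, neg_mul, mul_neg, neg_neg, stdBasis_neg_one]
  abel

lemma w_sq (i j : Fin n) (hij : i ≠ j) :
    (Matrix.transvection i j 1 * Matrix.transvection j i (-1) * Matrix.transvection i j 1) *
    (Matrix.transvection i j 1 * Matrix.transvection j i (-1) * Matrix.transvection i j 1) =
      Dmat i j := by
  rw [w_eq i j hij]
  have expand : (1 + single i j (1:ℝ) - single j i 1 - single i i 1
        - single j j 1) * (1 + single i j (1:ℝ) - single j i 1
        - single i i 1 - single j j 1) =
      1 - single i i (2:ℝ) - single j j (2:ℝ) := by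
    simp only [Matrix.mul_sub, Matrix.sub_mul, Matrix.mul_add, Matrix.add_mul, Matrix.one_mul,
      Matrix.mul_one, Matrix.single_mul_single_same, Matrix.single_mul_single_of_ne, hij,
      hij.symm, ne_eq, not_false_iff, one_mul, mul_one]
    rw [show (2:ℝ) = 1 + 1 by norm_num, Matrix.single_add, Matrix.single_add]
    abel
  rw [expand]
  have hji : j ≠ i := hij.symm
  ext k l
  by_cases hkl : k = l
  · subst hkl
    by_cases h1 : k = i
    · subst h1
      simp [Dmat, Matrix.single, hij, hji]
      norm_num
    · by_cases h2 : k = j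
      · subst h2
        simp [Dmat, Matrix.single, hij, hji]
        norm_num
      · have h1' : ¬ i = k := fun h => h1 h.symm
        have h2' : ¬ j = k := fun h => h2 h.symm
        simp [Dmat, Matrix.single, h1, h2, h1', h2']
  · have e1 : ¬(i = k ∧ i = l) := fun h => hkl (h.1.symm.trans h.2)
    have e2 : ¬(j = k ∧ j = l) := fun h => hkl (h.1.symm.trans h.2)
    simp [Dmat, Matrix.single, hkl, e1, e2, Matrix.one_apply_ne hkl]


lemma detU {M : Matrix (Fin n) (Fin n) ℝ} (h : M.det ≠ 0) : M ∈ U n := h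

lemma joinedIn_Dmat (i j : Fin n) (hij : i ≠ j) : JoinedIn (U n) (Dmat i j) 1 := by
  rw [← w_sq i j hij]
  have h1 := joinedIn_transvection i j hij (1:ℝ)
  have h2 := joinedIn_transvection j i hij.symm (-1:ℝ)
  have := joinedIn_mul (joinedIn_mul (joinedIn_mul h1 h2) h1) (joinedIn_mul (joinedIn_mul h1 h2) h1)
  simpa using this

lemma comb_pos {a t : ℝ} (ha : 0 < a) (h0 : 0 ≤ t) (h1 : t ≤ 1) : 0 < (1 - t) * a + t := by
  rcases h0.eq_or_lt with h | h
  · rw [← h]; simpa using ha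
  · have : 0 ≤ (1 - t) * a := mul_nonneg (by linarith) ha.le
    linarith

lemma comb_ne {a t : ℝ} (ha : a ≠ 0) (h0 : 0 ≤ t) (h1 : t ≤ 1) :
    (1 - t) * a + t * (if a < 0 then (-1:ℝ) else 1) ≠ 0 := by
  rcases lt_or_gt_of_ne ha with h | h
  · rw [if_pos h]
    have := comb_pos (neg_pos.2 h) h0 h1
    intro hc; nlinarith
  · rw [if_neg (not_lt.2 h.le)]
    have := comb_pos h h0 h1
    intro hc; nlinarith

lemma joinedIn_diagonal_sign (d : Fin n → ℝ) (hd : ∀ k, d k ≠ 0) :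
    JoinedIn (U n) (Matrix.diagonal d)
      (Matrix.diagonal fun k => if d k < 0 then (-1:ℝ) else 1) := by
  have := joinedIn_of_mem (U n)
    (f := fun t : unitInterval => Matrix.diagonal fun k =>
      (1 - (t:ℝ)) * d k + (t:ℝ) * (if d k < 0 then (-1:ℝ) else 1)) ?_ ?_
  · simpa using this
  · exact (continuous_pi fun k =>
      (((continuous_const.sub continuous_subtype_val).mul continuous_const).add
        (continuous_subtype_val.mul continuous_const))).matrix_diagonal
  · intro t
    simp only [U, Set.mem_setOf_eq, Matrix.det_diagonal]
    exact Finset.prod_ne_zero_iff.2 fun k _ => comb_ne (hd k) t.2.1 t.2.2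


def Jmat (i0 : Fin n) : Matrix (Fin n) (Fin n) ℝ :=
  Matrix.diagonal (fun k => if k = i0 then -1 else 1)

lemma Jmat_entries_ne (i0 k : Fin n) : (if k = i0 then (-1:ℝ) else 1) ≠ 0 := by
  split_ifs <;> norm_num

lemma det_Jmat (i0 : Fin n) : (Jmat i0).det = -1 := by
  rw [Jmat, Matrix.det_diagonal]
  rw [Finset.prod_ite_eq' Finset.univ i0 (fun _ => (-1:ℝ))]
  simp

lemma Jmat_mem (i0 : Fin n) : Jmat i0 ∈ U n := by
  simp [U, det_Jmat]

lemma Jmat_mul_Jmat (i0 : Fin n) : Jmat i0 * Jmat i0 = 1 := by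
  rw [Jmat, Matrix.diagonal_mul_diagonal, ← Matrix.diagonal_one]
  refine congrArg Matrix.diagonal (funext fun k => ?_)
  split_ifs <;> norm_num

lemma one_mem : (1 : Matrix (Fin n) (Fin n) ℝ) ∈ U n := by simp [U]

lemma flip_eq (ε : Fin n → ℝ) (i j : Fin n) (hεi : ε i = -1) (hεj : ε j = -1) :
    Matrix.diagonal ε =
      Matrix.diagonal (fun k => if k = i ∨ k = j then 1 else ε k) * Dmat i j := by
  rw [Dmat, Matrix.diagonal_mul_diagonal]
  refine congrArg Matrix.diagonal (funext fun k => ?_)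
  by_cases h : k = i ∨ k = j
  · rcases h with h | h <;> subst h <;> simp [hεi, hεj]
  · simp [h]

lemma single_eq (ε : Fin n → ℝ) (i i0 : Fin n) (hii : i ≠ i0) (hεi : ε i = -1)
    (hother : ∀ k, k ≠ i → ε k = 1) :
    Matrix.diagonal ε = Jmat i0 * Dmat i0 i := by
  rw [Jmat, Dmat, Matrix.diagonal_mul_diagonal]
  refine congrArg Matrix.diagonal (funext fun k => ?_)
  by_cases h0 : k = i0
  · subst h0
    simp [hother k hii.symm, fun h : (k:Fin n) = i => hii h.symm]
  · by_cases h1 : k = i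
    · subst h1
      simp [h0, hεi]
    · simp [h0, h1, hother k h1]

lemma signdiag_joined (i0 : Fin n) (ε : Fin n → ℝ) (hε : ∀ k, ε k = 1 ∨ ε k = -1) :
    JoinedIn (U n) (Matrix.diagonal ε) 1 ∨ JoinedIn (U n) (Matrix.diagonal ε) (Jmat i0) := by
  generalize hN : (Finset.univ.filter fun k => ε k = -1).card = N
  induction N using Nat.strong_induction_on generalizing ε with
  | _ N IH => ?_
  rcases Nat.lt_or_ge N 2 with hN2 | hN2
  · interval_cases N
    · left
      have : ε = fun _ => (1:ℝ) := by
        funext k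
        rcases hε k with h | h
        · exact h
        · exfalso
          have hm : k ∈ Finset.univ.filter fun k => ε k = -1 := by simp [h]
          rw [Finset.card_eq_zero.1 hN] at hm
          simp at hm
      rw [this, Matrix.diagonal_one]
      exact JoinedIn.refl one_mem
    · obtain ⟨i, hi⟩ := Finset.card_eq_one.1 hN
      have hmemi : ε i = -1 := by
        have : i ∈ Finset.univ.filter fun k => ε k = -1 := hi ▸ Finset.mem_singleton_self i
        simpa using this
      have hother : ∀ k, k ≠ i → ε k = 1 := by
        intro k hk
        rcases hε k with h | h
        · exact h
        · exfalso
          have hm : k ∈ Finset.univ.filter fun k => ε k = -1 := by simp [h]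
          rw [hi] at hm
          exact hk (Finset.mem_singleton.1 hm)
      right
      by_cases hii : i = i0
      · subst hii
        have : ε = fun k => if k = i then (-1:ℝ) else 1 := by
          funext k
          by_cases hk : k = i
          · subst hk; simpa using hmemi
          · simp [hk, hother k hk]
        rw [this]
        exact JoinedIn.refl (Jmat_mem i)
      · rw [single_eq ε i i0 hii hmemi hother]
        have := joinedIn_mul (JoinedIn.refl (x := Jmat i0) (Jmat_mem i0))
          (joinedIn_Dmat i0 i (fun h => hii h.symm))
        simpa using this
  · have h1 : 1 < (Finset.univ.filter fun k => ε k = -1).card := by omega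
    obtain ⟨i, hi, j, hj, hij⟩ := Finset.one_lt_card.1 h1
    have hεi : ε i = -1 := by simpa using hi
    have hεj : ε j = -1 := by simpa using hj
    have hε'v : ∀ k, (if k = i ∨ k = j then (1:ℝ) else ε k) = 1 ∨
        (if k = i ∨ k = j then (1:ℝ) else ε k) = -1 := by
      intro k
      by_cases h : k = i ∨ k = j
      · left; rw [if_pos h]
      · rw [if_neg h]; exact hε k
    have hcard : (Finset.univ.filter fun k =>
        (if k = i ∨ k = j then (1:ℝ) else ε k) = -1).card < N := by
      have hsub : (Finset.univ.filter fun k =>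
          (if k = i ∨ k = j then (1:ℝ) else ε k) = -1) ⊆
          (Finset.univ.filter fun k => ε k = -1).erase i := by
        intro k hk
        simp only [Finset.mem_filter, Finset.mem_univ, true_and] at hk
        by_cases h : k = i ∨ k = j
        · exfalso; rw [if_pos h] at hk; norm_num at hk
        · rw [if_neg h] at hk
          push_neg at h
          exact Finset.mem_erase.2 ⟨h.1, by simp [hk]⟩
      calc (Finset.univ.filter fun k =>
            (if k = i ∨ k = j then (1:ℝ) else ε k) = -1).card
          ≤ ((Finset.univ.filter fun k => ε k = -1).erase i).card := Finset.card_le_card hsub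
        _ < N := by
            rw [← hN]
            exact Finset.card_erase_lt_of_mem hi
    rw [flip_eq ε i j hεi hεj]
    rcases IH _ hcard _ hε'v rfl with hres | hres
    · left
      have := joinedIn_mul hres (joinedIn_Dmat i j hij)
      simpa using this
    · right
      have := joinedIn_mul hres (joinedIn_Dmat i j hij)
      simpa using this

lemma matrix_joined (i0 : Fin n) (M : Matrix (Fin n) (Fin n) ℝ) (hM : M.det ≠ 0) :
    JoinedIn (U n) M 1 ∨ JoinedIn (U n) M (Jmat i0) := by
  apply Matrix.diagonal_transvection_induction_of_det_ne_zero _ M hM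
  · intro d hd
    have hd' : ∀ k, d k ≠ 0 := by
      rw [Matrix.det_diagonal] at hd
      exact fun k => Finset.prod_ne_zero_iff.1 hd k (Finset.mem_univ k)
    have h1 := joinedIn_diagonal_sign d hd'
    have h2 := signdiag_joined i0 (fun k => if d k < 0 then (-1:ℝ) else 1)
      (fun k => by split_ifs <;> simp)
    rcases h2 with h2 | h2
    · exact Or.inl (h1.trans h2)
    · exact Or.inr (h1.trans h2)
  · intro t
    rcases t with ⟨i, j, hij, c⟩
    left
    simpa [Matrix.TransvectionStruct.toMatrix] using joinedIn_transvection i j hij c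
  · intro A B hA hB pA pB
    rcases pA with pA | pA <;> rcases pB with pB | pB
    · left; simpa using joinedIn_mul pA pB
    · right; simpa using joinedIn_mul pA pB
    · right; simpa using joinedIn_mul pA pB
    · left
      have := joinedIn_mul pA pB
      rw [Jmat_mul_Jmat] at this
      exact this


lemma path_sign {X : Type*} [TopologicalSpace X] {f : X → ℝ} (hf : Continuous f)
    {a b : X} (γ : Path a b) (hne : ∀ t, f (γ t) ≠ 0) (h0 : 0 < f a) (t : unitInterval) :
    0 < f (γ t) := by
  by_contra hb
  push_neg at hb
  have hb' : f (γ t) < 0 := lt_of_le_of_ne hb (hne t)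
  have hiv := intermediate_value_univ t 0 (hf.comp γ.continuous)
  have h0' : (0:ℝ) ∈ Set.Icc (f (γ t)) (f (γ 0)) := by
    constructor
    · exact hb'.le
    · simp only [γ.source]; exact h0.le
  obtain ⟨s, hs⟩ := hiv h0'
  exact hne s hs

lemma det_endpoint_pos {A B : Matrix (Fin n) (Fin n) ℝ} (h : JoinedIn (U n) A B)
    (hA : 0 < A.det) : 0 < B.det := by
  obtain ⟨γ, hγ⟩ := h
  have := path_sign (f := fun M : Matrix (Fin n) (Fin n) ℝ => M.det)
    (continuous_id.matrix_det) γ (fun t => hγ t) hA 1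
  simpa [γ.target] using this

lemma det_endpoint_neg {A B : Matrix (Fin n) (Fin n) ℝ} (h : JoinedIn (U n) A B)
    (hA : A.det < 0) : B.det < 0 := by
  obtain ⟨γ, hγ⟩ := h
  have := path_sign (f := fun M : Matrix (Fin n) (Fin n) ℝ => -M.det)
    (continuous_id.matrix_det.neg) γ (fun t => neg_ne_zero.2 (hγ t)) (by simpa using hA) 1
  simp only [γ.target] at this
  linarith

lemma upgrade_pos {A B : Matrix (Fin n) (Fin n) ℝ} (h : JoinedIn (U n) A B)
    (hA : 0 < A.det) : JoinedIn {M : Matrix (Fin n) (Fin n) ℝ | 0 < M.det} A B := by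
  obtain ⟨γ, hγ⟩ := h
  exact ⟨γ, fun t => path_sign (continuous_id.matrix_det) γ (fun t => hγ t) hA t⟩

lemma upgrade_neg {A B : Matrix (Fin n) (Fin n) ℝ} (h : JoinedIn (U n) A B)
    (hA : A.det < 0) : JoinedIn {M : Matrix (Fin n) (Fin n) ℝ | M.det < 0} A B := by
  obtain ⟨γ, hγ⟩ := h
  refine ⟨γ, fun t => ?_⟩
  have := path_sign (f := fun M : Matrix (Fin n) (Fin n) ℝ => -M.det)
    (continuous_id.matrix_det.neg) γ (fun t => neg_ne_zero.2 (hγ t)) (by simpa using hA) t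
  simp only [Set.mem_setOf_eq]
  linarith

lemma joined_pos (i0 : Fin n) {M : Matrix (Fin n) (Fin n) ℝ} (h : 0 < M.det) :
    JoinedIn {A : Matrix (Fin n) (Fin n) ℝ | 0 < A.det} M 1 := by
  rcases matrix_joined i0 M h.ne' with hj | hj
  · exact upgrade_pos hj h
  · exfalso
    have := det_endpoint_pos hj h
    rw [det_Jmat] at this
    linarith

lemma joined_neg (i0 : Fin n) {M : Matrix (Fin n) (Fin n) ℝ} (h : M.det < 0) :
    JoinedIn {A : Matrix (Fin n) (Fin n) ℝ | A.det < 0} M (Jmat i0) := by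
  rcases matrix_joined i0 M h.ne with hj | hj
  · exfalso
    have := det_endpoint_neg hj h
    rw [Matrix.det_one] at this
    linarith
  · exact upgrade_neg hj h

variable {m : ℕ}


lemma det_one_sub_ne {X Y : Matrix (Fin m) (Fin m) ℝ}
    (h : (fromBlocks X (1 : Matrix (Fin m) (Fin m) ℝ) 1 Y).PosDef) :
    (1 - Y * X).det ≠ 0 := by
  intro hdet
  obtain ⟨v, hv0, hveq⟩ := Matrix.exists_mulVec_eq_zero_iff.2 hdet
  have hYX : Y *ᵥ (X *ᵥ v) = v := by
    have := hveq
    rw [Matrix.sub_mulVec, Matrix.one_mulVec, ← Matrix.mulVec_mulVec] at this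
    have h2 := sub_eq_zero.1 this
    exact h2.symm
  set u : (Fin m ⊕ Fin m) → ℝ := Sum.elim (-v) (X *ᵥ v) with hu
  have hu0 : u ≠ 0 := by
    intro hz
    apply hv0
    funext i
    have := congrFun hz (Sum.inl i)
    simpa [u] using this
  have hq := h.dotProduct_mulVec_pos hu0
  have hval : dotProduct (star u) ((fromBlocks X 1 1 Y) *ᵥ u) = 0 := by
    rw [hu]
    rw [Matrix.fromBlocks_mulVec]
    rw [show (star (Sum.elim (-v) (X *ᵥ v))) = Sum.elim (-v) (X *ᵥ v) from star_trivial _]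
    rw [sumElim_dotProduct_sumElim]
    simp only [Sum.elim_comp_inl, Sum.elim_comp_inr, Matrix.one_mulVec, Matrix.mulVec_neg, hYX,
      dotProduct_neg, neg_dotProduct, dotProduct_add, add_dotProduct, neg_neg]
    rw [dotProduct_comm v (X *ᵥ v)]
    ring
  rw [hval] at hq
  exact lt_irrefl 0 hq


variable {nx nu ny nw nz : ℕ}

variable {nx nu ny nw nz : ℕ}

lemma posdef_smul {m' : Type*} [Fintype m'] [DecidableEq m'] {A : Matrix m' m' ℝ}
    (hA : A.PosDef) {c : ℝ} (hc : 0 < c) : (c • A).PosDef := by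
  refine Matrix.PosDef.of_dotProduct_mulVec_pos ?_ ?_
  · have h1 := hA.1
    rw [Matrix.IsHermitian, Matrix.conjTranspose_smul, h1]
    congr 1
  · intro x hx
    have h2 := hA.dotProduct_mulVec_pos hx
    rw [Matrix.smul_mulVec, dotProduct_smul, smul_eq_mul]
    exact mul_pos hc h2

lemma posdef_comb {m' : Type*} [Fintype m'] [DecidableEq m'] {A B : Matrix m' m' ℝ}
    (hA : A.PosDef) (hB : B.PosDef) {a b : ℝ} (ha : 0 ≤ a) (hb : 0 ≤ b) (hab : a + b = 1) :
    (a • A + b • B).PosDef := by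
  rcases ha.eq_or_lt with h | h
  · have hb1 : b = 1 := by linarith
    simp [← h, hb1, hB]
  · rcases hb.eq_or_lt with h' | h'
    · have ha1 : a = 1 := by linarith
      simp [← h', ha1, hA]
    · exact (posdef_smul hA h).add (posdef_smul hB h')

lemma Mγmat_comb (P : Plant nx nu ny nw nz) (γ : ℝ) (a b : ℝ) (hab : a + b = 1)
    (X Y Ah : Matrix (Fin nx) (Fin nx) ℝ) (Bh : Matrix (Fin nx) (Fin ny) ℝ)
    (Ch : Matrix (Fin nu) (Fin nx) ℝ) (Dh : Matrix (Fin nu) (Fin ny) ℝ)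
    (X' Y' Ah' : Matrix (Fin nx) (Fin nx) ℝ) (Bh' : Matrix (Fin nx) (Fin ny) ℝ)
    (Ch' : Matrix (Fin nu) (Fin nx) ℝ) (Dh' : Matrix (Fin nu) (Fin ny) ℝ) :
    Mγmat P γ (a•X+b•X') (a•Y+b•Y') (a•Ah+b•Ah') (a•Bh+b•Bh') (a•Ch+b•Ch') (a•Dh+b•Dh') =
      a • Mγmat P γ X Y Ah Bh Ch Dh + b • Mγmat P γ X' Y' Ah' Bh' Ch' Dh' := by
  have hb : b = 1 - a := by linarith
  subst hb
  simp only [Mγmat, Matrix.fromBlocks_smul, Matrix.fromBlocks_add]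
  rw [Matrix.fromBlocks_inj]
  refine ⟨?_, ?_, ?_, ?_⟩ <;> rw [Matrix.fromBlocks_inj] <;> refine ⟨?_, ?_, ?_, ?_⟩ <;>
  · simp only [Matrix.mul_add, Matrix.add_mul, Matrix.mul_smul, Matrix.smul_mul,
      Matrix.transpose_add, Matrix.transpose_smul, smul_add, smul_smul]
    module

lemma G_connect (P : Plant nx nu ny nw nz) (γ : ℝ) (S : Set (Matrix (Fin nx) (Fin nx) ℝ))
    (hS : ∀ M ∈ S, M.det ≠ 0) {W W₀ : FTuple nx nu ny} (hW : W ∈ Fset P γ) (hW₀ : W₀ ∈ Fset P γ)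
    {Pi Pi₀ Ξ : Matrix (Fin nx) (Fin nx) ℝ} (hΞ : Ξ * Pi = 1 - W.2.1 * W.1)
    (hjoin : JoinedIn S Pi Pi₀)
    (hFcomb : ∀ t : unitInterval, (1 - (t:ℝ)) • W + (t:ℝ) • W₀ ∈ Fset P γ) :
    JoinedIn {Z : GTuple nx nu ny | Z ∈ Gset P γ ∧ Z.2.1 ∈ S}
      ((W, Pi, Ξ)) ((W₀, Pi₀, (1 - W₀.2.1 * W₀.1) * Pi₀⁻¹)) := by
  obtain ⟨γp, hγp⟩ := hjoin
  have hdet : ∀ t, (γp t).det ≠ 0 := fun t => hS _ (hγp t)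
  set Wf : unitInterval → FTuple nx nu ny := fun t => (1 - (t:ℝ)) • W + (t:ℝ) • W₀ with hWf
  set f : unitInterval → GTuple nx nu ny := fun t =>
    (Wf t, γp t, (1 - (Wf t).2.1 * (Wf t).1) * (γp t)⁻¹) with hfdef
  have hWfc : Continuous Wf := by
    apply Continuous.add
    · exact (continuous_const.sub continuous_subtype_val).smul continuous_const
    · exact continuous_subtype_val.smul continuous_const
  have hinv : Continuous fun t => (γp t)⁻¹ := by
    rw [continuous_iff_continuousAt]
    intro t
    refine ContinuousAt.comp ?_ γp.continuous.continuousAt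
    refine continuousAt_matrix_inv _ ?_
    rw [Ring.inverse_eq_inv']
    exact continuousAt_inv₀ (hdet t)
  have hcont : Continuous f := by
    refine hWfc.prodMk (γp.continuous.prodMk ?_)
    refine Continuous.matrix_mul ?_ hinv
    exact continuous_const.sub (Continuous.matrix_mul hWfc.snd.fst hWfc.fst)
  have hmem : ∀ t, f t ∈ {Z : GTuple nx nu ny | Z ∈ Gset P γ ∧ Z.2.1 ∈ S} := by
    intro t
    refine ⟨⟨hFcomb t, ?_⟩, hγp t⟩
    show (1 - (Wf t).2.1 * (Wf t).1) * (γp t)⁻¹ * γp t = 1 - (Wf t).2.1 * (Wf t).1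
    rw [mul_assoc, Matrix.nonsing_inv_mul _ (Ne.isUnit (hdet t)), mul_one]
  have hPidet : Pi.det ≠ 0 := by
    have := hdet 0
    rwa [γp.source] at this
  have hf0 : f 0 = (W, Pi, Ξ) := by
    have hW0 : Wf 0 = W := by
      simp [hWf]
    rw [hfdef]
    simp only [hW0, γp.source]
    refine Prod.ext rfl (Prod.ext rfl ?_)
    show (1 - W.2.1 * W.1) * Pi⁻¹ = Ξ
    rw [← hΞ, mul_assoc, Matrix.mul_nonsing_inv _ (Ne.isUnit hPidet), mul_one]
  have hf1 : f 1 = (W₀, Pi₀, (1 - W₀.2.1 * W₀.1) * Pi₀⁻¹) := by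
    have hW1 : Wf 1 = W₀ := by
      simp [hWf]
    rw [hfdef]
    simp only [hW1, γp.target]
  exact ⟨⟨⟨f, hcont⟩, hf0, hf1⟩, hmem⟩

lemma blockXY_comb (a b : ℝ) (hab : a + b = 1) (X Y X' Y' : Matrix (Fin nx) (Fin nx) ℝ) :
    (fromBlocks (a•X+b•X') (1 : Matrix (Fin nx) (Fin nx) ℝ) 1 (a•Y+b•Y')) =
      a • fromBlocks X 1 1 Y + b • fromBlocks X' 1 1 Y' := by
  have hb : b = 1 - a := by linarith
  subst hb
  simp only [Matrix.fromBlocks_smul, Matrix.fromBlocks_add]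
  rw [Matrix.fromBlocks_inj]
  refine ⟨rfl, ?_, ?_, rfl⟩ <;> module

lemma symm_comb {A B : Matrix (Fin nx) (Fin nx) ℝ} (hA : A.IsSymm) (hB : B.IsSymm) (a b : ℝ) :
    (a • A + b • B).IsSymm := by
  rw [Matrix.IsSymm, Matrix.transpose_add, Matrix.transpose_smul, Matrix.transpose_smul, hA, hB]

lemma Fset_comb (P : Plant nx nu ny nw nz) (γ : ℝ) {W W' : FTuple nx nu ny}
    (hW : W ∈ Fset P γ) (hW' : W' ∈ Fset P γ) {a b : ℝ} (ha : 0 ≤ a) (hb : 0 ≤ b)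
    (hab : a + b = 1) : a • W + b • W' ∈ Fset P γ := by
  obtain ⟨X, Y, Ah, Bh, Ch, Dh⟩ := W
  obtain ⟨X', Y', Ah', Bh', Ch', Dh'⟩ := W'
  obtain ⟨h1, h2, h3, h4⟩ := hW
  obtain ⟨h1', h2', h3', h4'⟩ := hW'
  simp only [Prod.smul_mk, Prod.mk_add_mk]
  refine ⟨symm_comb h1 h1' a b, symm_comb h2 h2' a b, ?_, ?_⟩
  · show (fromBlocks (a•X+b•X') (1 : Matrix (Fin nx) (Fin nx) ℝ) 1 (a•Y+b•Y')).PosDef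
    rw [blockXY_comb a b hab]
    exact posdef_comb h3 h3' ha hb hab
  · show (-(Mγmat P γ (a•X+b•X') (a•Y+b•Y') (a•Ah+b•Ah') (a•Bh+b•Bh') (a•Ch+b•Ch')
      (a•Dh+b•Dh'))).PosDef
    rw [Mγmat_comb P γ a b hab, neg_add, ← smul_neg, ← smul_neg]
    exact posdef_comb h4 h4' ha hb hab

lemma detPi_ne (P : Plant nx nu ny nw nz) (γ : ℝ) {Z : GTuple nx nu ny} (hZ : Z ∈ Gset P γ) :
    Z.2.1.det ≠ 0 := by
  have hkey := det_one_sub_ne hZ.1.2.2.1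
  intro h
  apply hkey
  rw [← hZ.2, Matrix.det_mul, h, mul_zero]

end GTC

/-- For `γ > 0` and `n_x ≥ 1`, `G⁺ = {Z ∈ G_γ : det Π > 0}` and
`G⁻ = {Z ∈ G_γ : det Π < 0}` are disjoint with union `G_γ`, no point of `G⁺` can be joined
to a point of `G⁻` within `G_γ`, and if `F_γ ≠ ∅` then `G⁺, G⁻` are nonempty and
path-connected; so `G_γ` has exactly two path-connected components. -/
theorem Gset_two_components {nx nu ny nw nz : ℕ} (hnx : 1 ≤ nx) (hnu : 0 < nu) (hny : 0 < ny)
    (hnw : 0 < nw) (hnz : 0 < nz) (P : Plant nx nu ny nw nz) (γ : ℝ) (hγ : 0 < γ) :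
    let Gplus : Set (GTuple nx nu ny) := {Z ∈ Gset P γ | 0 < Z.2.1.det}
    let Gminus : Set (GTuple nx nu ny) := {Z ∈ Gset P γ | Z.2.1.det < 0}
    Disjoint Gplus Gminus ∧
    Gset P γ = Gplus ∪ Gminus ∧
    (∀ Z₁ ∈ Gplus, ∀ Z₂ ∈ Gminus, ¬ JoinedIn (Gset P γ) Z₁ Z₂) ∧
    ((Fset P γ).Nonempty →
      Gplus.Nonempty ∧ Gminus.Nonempty ∧ IsPathConnected Gplus ∧ IsPathConnected Gminus)  := by
  intro Gplus Gminus
  have hGp : Gplus = {Z : GTuple nx nu ny | Z ∈ Gset P γ ∧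
      Z.2.1 ∈ {M : Matrix (Fin nx) (Fin nx) ℝ | 0 < M.det}} := rfl
  have hGm : Gminus = {Z : GTuple nx nu ny | Z ∈ Gset P γ ∧
      Z.2.1 ∈ {M : Matrix (Fin nx) (Fin nx) ℝ | M.det < 0}} := rfl
  have i0 : Fin nx := ⟨0, hnx⟩
  refine ⟨?_, ?_, ?_, ?_⟩
  · -- disjoint
    rw [Set.disjoint_left]
    rintro Z ⟨_, hp⟩ ⟨_, hm⟩
    exact absurd hp (lt_asymm hm)
  · -- union
    ext Z
    constructor
    · intro h
      rcases (GTC.detPi_ne P γ h).lt_or_gt with hneg | hpos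
      · exact Or.inr ⟨h, hneg⟩
      · exact Or.inl ⟨h, hpos⟩
    · rintro (h | h) <;> exact h.1
  · -- separation
    rintro Z₁ hZ₁ Z₂ hZ₂ ⟨γp, hγp⟩
    have hc : Continuous fun Z : GTuple nx nu ny => Z.2.1.det :=
      (continuous_snd.fst).matrix_det
    have := GTC.path_sign hc γp (fun t => GTC.detPi_ne P γ (hγp t)) hZ₁.2 1
    rw [γp.target] at this
    exact absurd this (lt_asymm hZ₂.2)
  · -- nonemptiness and path-connectivity
    rintro ⟨W₀, hW₀⟩
    have hFcomb : ∀ (W : FTuple nx nu ny), W ∈ Fset P γ →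
        ∀ t : unitInterval, (1 - (t:ℝ)) • W + (t:ℝ) • W₀ ∈ Fset P γ := by
      intro W hW t
      exact GTC.Fset_comb P γ hW hW₀ (by simpa using t.2.2) t.2.1 (by ring)
    -- base points
    have hbase_p : (W₀, (1 : Matrix (Fin nx) (Fin nx) ℝ), 1 - W₀.2.1 * W₀.1) ∈ Gplus := by
      refine ⟨⟨hW₀, by rw [mul_one]⟩, ?_⟩
      simp
    have hbase_m : (W₀, GTC.Jmat i0, (1 - W₀.2.1 * W₀.1) * GTC.Jmat i0) ∈ Gminus := by
      refine ⟨⟨hW₀, ?_⟩, ?_⟩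
      · show (1 - W₀.2.1 * W₀.1) * GTC.Jmat i0 * GTC.Jmat i0 = _
        rw [mul_assoc, GTC.Jmat_mul_Jmat, mul_one]
      · show (GTC.Jmat i0).det < 0
        rw [GTC.det_Jmat]
        norm_num
    have hconn_p : ∀ Z ∈ Gplus,
        JoinedIn Gplus Z (W₀, (1 : Matrix (Fin nx) (Fin nx) ℝ), 1 - W₀.2.1 * W₀.1) := by
      rintro ⟨W, Pi, Ξ⟩ ⟨hZG, hZdet⟩
      have hj := GTC.joined_pos i0 (hZdet : 0 < Pi.det)
      have := GTC.G_connect P γ {M : Matrix (Fin nx) (Fin nx) ℝ | 0 < M.det}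
        (fun M hM => ne_of_gt hM) hZG.1 hW₀ hZG.2 hj (hFcomb W hZG.1)
      rw [hGp]
      simpa using this
    have hconn_m : ∀ Z ∈ Gminus,
        JoinedIn Gminus Z (W₀, GTC.Jmat i0, (1 - W₀.2.1 * W₀.1) * GTC.Jmat i0) := by
      rintro ⟨W, Pi, Ξ⟩ ⟨hZG, hZdet⟩
      have hj := GTC.joined_neg i0 (hZdet : Pi.det < 0)
      have := GTC.G_connect P γ {M : Matrix (Fin nx) (Fin nx) ℝ | M.det < 0}
        (fun M hM => ne_of_lt hM) hZG.1 hW₀ hZG.2 hj (hFcomb W hZG.1)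
      rw [hGm]
      rw [Matrix.inv_eq_right_inv (GTC.Jmat_mul_Jmat i0)] at this
      simpa using this
    refine ⟨⟨_, hbase_p⟩, ⟨_, hbase_m⟩, ?_, ?_⟩
    · refine ⟨_, hbase_p, ?_⟩
      intro Z hZ
      exact (hconn_p Z hZ).symm
    · refine ⟨_, hbase_m, ?_⟩
      intro Z hZ
      exact (hconn_m Z hZ).symm
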